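/- Let a and b be positive integers with a > 2, b < 2a, b ≠ a, and gcd(a, b) = 1. Then there exists a real θ such that cos(aθ) + cos(bθ) + cos(2aθ) ≤ −13/8. -/

import Mathlib

open Real

lemma cos_le_neg_half_aux {x : ℝ} (h1 : 2 * π / 3 ≤ x) (h2 : x ≤ π) :
    Real.cos x ≤ -(1/2) := by
  have h23 : Real.cos (2 * π / 3) = -(1/2) := by
    have : 2 * π / 3 = π - π / 3 := by ring
    rw [this, Real.cos_pi_sub, Real.cos_pi_div_three]
  calc Real.cos x ≤ Real.cos (2 * π / 3) := by
        apply Real.cos_le_cos_of_nonneg_of_le_pi _ h2 h1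
        positivity
    _ = -(1/2) := h23

lemma cos_le_neg_half {x : ℝ} (h1 : 2 * π / 3 ≤ x) (h2 : x ≤ 4 * π / 3) :
    Real.cos x ≤ -(1/2) := by
  rcases le_total x π with h | h
  · exact cos_le_neg_half_aux h1 h
  · have hx : Real.cos x = Real.cos (2 * π - x) := by
      rw [Real.cos_sub, Real.cos_two_pi, Real.sin_two_pi]; ring
    rw [hx]
    apply cos_le_neg_half_aux
    · linarith
    · linarith

theorem exists_cos_sum_le_neg_thirteen_eighths (a b : ℕ) (ha : 2 < a)
    (hb : 0 < b) (hb2a : b < 2 * a) (hba : b ≠ a) (hgcd : Nat.gcd a b = 1) :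
    ∃ θ : ℝ, Real.cos (a * θ) + Real.cos (b * θ) + Real.cos (2 * a * θ) ≤
      -13/8 := by
  have hπ : (0:ℝ) < π := Real.pi_pos
  have hA3 : (3:ℝ) ≤ (a:ℝ) := by exact_mod_cast ha
  have hA0 : (0:ℝ) < (a:ℝ) := by linarith
  set x0 := Real.arccos (-(1/4)) with hx0def
  have hx0 : Real.cos x0 = -(1/4) := Real.cos_arccos (by norm_num) (by norm_num)
  set j : ℤ := ⌈(a:ℝ)/3 - (b:ℝ) * x0 / (2*π)⌉ with hjdef
  -- Bezout
  have hcop : IsCoprime (a:ℤ) (b:ℤ) := by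
    rw [Int.isCoprime_iff_gcd_eq_one]
    exact_mod_cast hgcd
  obtain ⟨x, y, hxy⟩ := hcop
  set m : ℤ := y * j with hmdef
  have hbm : (b:ℤ) * m = j + (a:ℤ) * (-(x*j)) := by
    rw [hmdef]; linear_combination j * hxy
  refine ⟨(x0 + 2*π*m) / a, ?_⟩
  have hθ1 : (a:ℝ) * ((x0 + 2*π*m) / a) = x0 + (m:ℝ) * (2*π) := by
    field_simp
  have hθ2 : 2 * (a:ℝ) * ((x0 + 2*π*m) / a) = 2*x0 + ((2*m : ℤ):ℝ) * (2*π) := by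
    push_cast
    field_simp
  have hc1 : Real.cos ((a:ℝ) * ((x0 + 2*π*m) / a)) = -(1/4) := by
    rw [hθ1, Real.cos_add_int_mul_two_pi, hx0]
  have hc2 : Real.cos (2 * (a:ℝ) * ((x0 + 2*π*m) / a)) = -(7/8) := by
    rw [hθ2, Real.cos_add_int_mul_two_pi, Real.cos_two_mul, hx0]
    norm_num
  -- the b part
  set φ : ℝ := ((b:ℝ) * x0 + 2*π*(j:ℝ)) / a with hφdef
  have hbmR : (b:ℝ) * (m:ℝ) = (j:ℝ) + (a:ℝ) * (-((x:ℝ)*(j:ℝ))) := by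
    exact_mod_cast hbm
  have hθ3 : (b:ℝ) * ((x0 + 2*π*m) / a) = φ + ((-(x*j) : ℤ):ℝ) * (2*π) := by
    rw [hφdef]
    push_cast
    field_simp
    linear_combination (2*π) * hbmR
  have hjlb : (a:ℝ)/3 - (b:ℝ) * x0 / (2*π) ≤ (j:ℝ) := Int.le_ceil _
  have hjub : (j:ℝ) < (a:ℝ)/3 - (b:ℝ) * x0 / (2*π) + 1 := Int.ceil_lt_add_one _
  have h2π : (0:ℝ) < 2*π := by positivity
  have key : 2*π*((b:ℝ)*x0/(2*π)) = (b:ℝ)*x0 := by field_simp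
  have h1 := mul_le_mul_of_nonneg_left hjlb h2π.le
  have h2 := mul_le_mul_of_nonneg_left hjub.le h2π.le
  have hjlb2 : 2*π*(a:ℝ)/3 - (b:ℝ)*x0 ≤ 2*π*(j:ℝ) := by nlinarith [h1, key]
  have hjub2 : 2*π*(j:ℝ) ≤ 2*π*(a:ℝ)/3 - (b:ℝ)*x0 + 2*π := by nlinarith [h2, key]
  have hφlb : 2*π/3 ≤ φ := by
    rw [hφdef, le_div_iff₀ hA0]
    linarith [hjlb2]
  have hφub : φ ≤ 4*π/3 := by
    rw [hφdef, div_le_iff₀ hA0]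
    have haux : 2*π*3 ≤ 2*π*(a:ℝ) := mul_le_mul_of_nonneg_left hA3 h2π.le
    linarith [hjub2, haux]
  have hc3 : Real.cos ((b:ℝ) * ((x0 + 2*π*m) / a)) ≤ -(1/2) := by
    rw [hθ3, Real.cos_add_int_mul_two_pi]
    exact cos_le_neg_half hφlb hφub
  rw [hc1, hc2]
  linarith [hc3]
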